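/- Let θ > 0 and f : ℝ → ℝ be C¹ on [0,θ] with f'(x) < 0 on [0,θ] and f(0) > 0 > f(θ); let x̄ ∈ (0,θ) be the unique zero of f, fix d ∈ (0,1) and A > Q_c := −f(θ), and set δ := ∫₀^θ dx/(f(x)+A). Suppose for each integer n ≥ 1 there are x_n ∈ (0, x̄) and T_n^R > 0 satisfying ∫_{x_n}^θ dx/(f(x)+A) + (n−1)·δ = d·T_n^R and ∫₀^{x_n} dx/f(x) = (1−d)·T_n^R. Then n/T_n^R → d/δ as n → ∞. -/

import Mathlib

/-- Firing-rate limit along the right border-collision periods (Proposition 4): with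
δ = ∫₀^θ dx/(f(x)+A), the firing-rates n/T_n^R tend to d/δ as n → ∞. -/
theorem firing_rate_limit_large_T (θ d A : ℝ) (f f' : ℝ → ℝ) (xbar : ℝ)
    (x TR : ℕ → ℝ)
    (hθ : 0 < θ)
    (hderiv : ∀ s ∈ Set.Icc 0 θ, HasDerivAt f (f' s) s)
    (hf'_cont : ContinuousOn f' (Set.Icc 0 θ))
    (hf'_neg : ∀ s ∈ Set.Icc 0 θ, f' s < 0)
    (hf0 : 0 < f 0) (hfθ : f θ < 0)
    (hxbar : xbar ∈ Set.Ioo 0 θ) (hfxbar : f xbar = 0)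
    (hd : d ∈ Set.Ioo (0:ℝ) 1) (hA : -f θ < A)
    (hx : ∀ n ≥ 1, x n ∈ Set.Ioo 0 xbar)
    (hTR : ∀ n ≥ 1, 0 < TR n)
    (heqR1 : ∀ n ≥ 1, (∫ s in (x n)..θ, 1 / (f s + A))
      + ((n : ℝ) - 1) * (∫ s in (0:ℝ)..θ, 1 / (f s + A)) = d * TR n)
    (heqR2 : ∀ n ≥ 1, (∫ s in (0:ℝ)..(x n), 1 / f s) = (1 - d) * TR n) :
    Filter.Tendsto (fun (n : ℕ) => (n : ℝ) / TR n) Filter.atTop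
      (nhds (d / ∫ s in (0:ℝ)..θ, 1 / (f s + A))) := by

  obtain ⟨hd0, hd1⟩ := hd
  obtain ⟨hxb0, hxbθ⟩ := hxbar
  set δ := ∫ s in (0:ℝ)..θ, 1 / (f s + A) with hδdef
  have hfc : ContinuousOn f (Set.Icc 0 θ) := fun s hs =>
    (hderiv s hs).continuousAt.continuousWithinAt
  have hanti : StrictAntiOn f (Set.Icc 0 θ) := by
    apply strictAntiOn_of_deriv_neg (convex_Icc 0 θ) hfc
    intro s hs
    rw [interior_Icc] at hs
    rw [(hderiv s (Set.mem_Icc_of_Ioo hs)).deriv]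
    exact hf'_neg s (Set.mem_Icc_of_Ioo hs)
  have hpos : ∀ s ∈ Set.Icc (0:ℝ) θ, 0 < f s + A := by
    intro s hs
    have hle : f θ ≤ f s := by
      rcases eq_or_lt_of_le hs.2 with h | h
      · rw [h]
      · exact le_of_lt (hanti hs (Set.right_mem_Icc.2 hθ.le) h)
    linarith
  have hgc : ContinuousOn (fun s => 1 / (f s + A)) (Set.Icc 0 θ) := by
    apply ContinuousOn.div continuousOn_const (hfc.add continuousOn_const)
    intro s hs; exact (hpos s hs).ne'
  have hInt : ∀ a b : ℝ, a ∈ Set.Icc (0:ℝ) θ → b ∈ Set.Icc (0:ℝ) θ →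
      IntervalIntegrable (fun s => 1 / (f s + A)) MeasureTheory.volume a b := by
    intro a b ha hb
    apply ContinuousOn.intervalIntegrable
    exact hgc.mono (Set.uIcc_subset_Icc ha hb)
  have hmemθ : θ ∈ Set.Icc (0:ℝ) θ := Set.right_mem_Icc.2 hθ.le
  have hmem0 : (0:ℝ) ∈ Set.Icc (0:ℝ) θ := Set.left_mem_Icc.2 hθ.le
  have hδpos : 0 < δ := by
    rw [hδdef]
    apply intervalIntegral.intervalIntegral_pos_of_pos_on (hInt 0 θ hmem0 hmemθ)
    · intro s hs
      exact div_pos one_pos (hpos s ⟨hs.1.le, hs.2.le⟩)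
    · exact hθ
  -- bounds on the partial integral
  have hmemx : ∀ n ≥ 1, x n ∈ Set.Icc (0:ℝ) θ := by
    intro n hn
    obtain ⟨h1, h2⟩ := hx n hn
    exact ⟨h1.le, le_trans h2.le hxbθ.le⟩
  have hIbounds : ∀ n ≥ 1, 0 ≤ (∫ s in (x n)..θ, 1 / (f s + A)) ∧
      (∫ s in (x n)..θ, 1 / (f s + A)) ≤ δ := by
    intro n hn
    have hxn := hmemx n hn
    have hxnθ : x n ≤ θ := hxn.2
    have hnn1 : 0 ≤ ∫ s in (x n)..θ, 1 / (f s + A) := by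
      apply intervalIntegral.integral_nonneg hxnθ
      intro s hs
      exact le_of_lt (div_pos one_pos (hpos s ⟨le_trans hxn.1 hs.1, hs.2⟩))
    have hnn0 : 0 ≤ ∫ s in (0:ℝ)..(x n), 1 / (f s + A) := by
      apply intervalIntegral.integral_nonneg hxn.1
      intro s hs
      exact le_of_lt (div_pos one_pos (hpos s ⟨hs.1, le_trans hs.2 hxnθ⟩))
    have hsplit : (∫ s in (0:ℝ)..(x n), 1 / (f s + A)) +
        (∫ s in (x n)..θ, 1 / (f s + A)) = δ :=
      intervalIntegral.integral_add_adjacent_intervals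
        (hInt 0 (x n) hmem0 hxn) (hInt (x n) θ hxn hmemθ)
    exact ⟨hnn1, by linarith⟩
  -- sandwich
  have hsand : ∀ n : ℕ, 1 ≤ n → ((n:ℝ) - 1) * δ ≤ d * TR n ∧ d * TR n ≤ (n:ℝ) * δ := by
    intro n hn
    have h1 := heqR1 n hn
    obtain ⟨hI0, hIδ⟩ := hIbounds n hn
    constructor <;> nlinarith
  -- limit of upper bound function
  have h1 : Filter.Tendsto (fun n : ℕ => ((n:ℝ) - 1)) Filter.atTop Filter.atTop :=
    Filter.tendsto_atTop_add_const_right _ _ tendsto_natCast_atTop_atTop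
  have h2 : Filter.Tendsto (fun n : ℕ => ((n:ℝ) - 1)⁻¹) Filter.atTop (nhds 0) :=
    h1.inv_tendsto_atTop
  have h3 : Filter.Tendsto (fun n : ℕ => 1 + ((n:ℝ) - 1)⁻¹) Filter.atTop (nhds 1) := by
    simpa using tendsto_const_nhds.add h2
  have h4 : Filter.Tendsto (fun n : ℕ => (n:ℝ) / ((n:ℝ) - 1)) Filter.atTop (nhds 1) := by
    apply h3.congr'
    filter_upwards [Filter.eventually_ge_atTop 2] with n hn
    have hn1 : ((n:ℝ) - 1) ≠ 0 := by
      have : (2:ℝ) ≤ (n:ℝ) := by exact_mod_cast hn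
      linarith
    field_simp
    ring
  have hupper : Filter.Tendsto (fun n : ℕ => (n:ℝ) * d / (((n:ℝ) - 1) * δ))
      Filter.atTop (nhds (d / δ)) := by
    have := h4.mul (tendsto_const_nhds (x := d / δ))
    rw [one_mul] at this
    apply this.congr
    intro n
    rw [div_mul_div_comm]
  refine tendsto_of_tendsto_of_tendsto_of_le_of_le'
    tendsto_const_nhds hupper ?_ ?_
  · filter_upwards [Filter.eventually_ge_atTop 2] with n hn
    have hn1 : n ≥ 1 := le_trans (by norm_num) hn
    have hT := hTR n hn1
    have := (hsand n hn1).2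
    rw [div_le_div_iff₀ hδpos hT]
    nlinarith
  · filter_upwards [Filter.eventually_ge_atTop 2] with n hn
    have hn1 : n ≥ 1 := le_trans (by norm_num) hn
    have hT := hTR n hn1
    have hnr : (2:ℝ) ≤ (n:ℝ) := by exact_mod_cast hn
    have hden : 0 < ((n:ℝ) - 1) * δ := by
      apply mul_pos (by linarith) hδpos
    have := (hsand n hn1).1
    rw [div_le_div_iff₀ hT hden]
    nlinarith
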